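/- Let Q be a finite set. If {S_1, …, S_n} is a selective family for Q (for every q ∈ Q there is a nonempty set of indices whose corresponding S_i's intersect exactly in {q}), then |Q| ≤ C(n, ⌊n/2⌋), the binomial coefficient n choose ⌊n/2⌋. -/

import Mathlib

open Classical

namespace JC

variable {Q : Type*} {X : Q → Type*}

/-- Projection of an alternative onto the coordinates in `S`. -/
def proj (S : Set Q) (x : ∀ q, X q) : ∀ q : S, X q := fun q => x q

/-- Pointwise projection of a set of alternatives onto the coordinates in `S`. -/
def projSet (S : Set Q) (Y : Set (∀ q, X q)) : Set (∀ q : S, X q) :=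
  (proj S) '' Y

/-- Projection of a menu onto the coordinates in `S`. -/
def projMenu (S : Set Q) (A : ∀ q, Set (X q)) : ∀ q : S, Set (X q) :=
  fun q => A q

/-- The product set of alternatives determined by a menu. -/
def prodSet (A : ∀ q, Set (X q)) : Set (∀ q, X q) := {x | ∀ q, x q ∈ A q}

/-- `c` is a joint choice on the family of menus `M`. -/
def IsJointChoice (M : Set (∀ q, Set (X q)))
    (c : (∀ q, Set (X q)) → Set (∀ q, X q)) : Prop :=
  ∀ A ∈ M, (c A).Nonempty ∧ c A ⊆ prodSet A

/-- `S`-separability of a joint choice: the projection of the chosen set onto `S`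
depends only on the projection of the menu onto `S`. -/
def Sep (M : Set (∀ q, Set (X q)))
    (c : (∀ q, Set (X q)) → Set (∀ q, X q)) (S : Set Q) : Prop :=
  ∀ A ∈ M, ∀ B ∈ M, projMenu S A = projMenu S B →
    projSet S (c A) = projSet S (c B)

/-- Asymmetric (strict) part of a relation. -/
def strictPart {α : Type*} (R : α → α → Prop) (x y : α) : Prop := R x y ∧ ¬ R y x

/-- Maximal elements of `A` with respect to `R`. -/
def maxOf {α : Type*} (R : α → α → Prop) (A : Set α) : Set α :=
  {x ∈ A | ∀ y ∈ A, ¬ strictPart R y x}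

/-- Acyclicity of (the strict part of) a relation. -/
def Acyclic {α : Type*} (R : α → α → Prop) : Prop :=
  ∀ x, ¬ Relation.TransGen (strictPart R) x x

/-- Revealed joint preference of a joint choice. -/
def revPref (M : Set (∀ q, Set (X q)))
    (c : (∀ q, Set (X q)) → Set (∀ q, X q)) (x y : ∀ q, X q) : Prop :=
  ∃ B ∈ M, x ∈ c B ∧ y ∈ prodSet B

/-- Rationalizability of a joint choice. -/
def Rationalizable (M : Set (∀ q, Set (X q)))
    (c : (∀ q, Set (X q)) → Set (∀ q, X q)) : Prop :=
  ∀ A ∈ M, c A = maxOf (revPref M c) (prodSet A)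

/-- Combine an `S`-part and a `-S`-part into a full alternative. -/
noncomputable def combine (S : Set Q) (xS : ∀ q : S, X q) (u : ∀ q : ↥(Sᶜ), X q) :
    ∀ q, X q :=
  fun q => if h : q ∈ S then xS ⟨q, h⟩ else u ⟨q, h⟩

/-- `S`-separability of a joint preference. -/
def PrefSep (S : Set Q) (R : (∀ q, X q) → (∀ q, X q) → Prop) : Prop :=
  ∀ (xS yS : ∀ q : S, X q),
    (∃ u, R (combine S xS u) (combine S yS u)) →
    ∀ u, R (combine S xS u) (combine S yS u)

/-- Revealed preference of a one-dimensional choice on sets. -/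
def revealed1 {α : Type*} (D : Set (Set α)) (d : Set α → Set α) (x y : α) : Prop :=
  ∃ B ∈ D, x ∈ d B ∧ y ∈ B


/-- Lemma 3.6, first half: if `Q` admits a selective family of size
`n`, then `|Q| ≤ C(n, ⌊n/2⌋)`. -/
theorem stmt_9 [Fintype Q] (n : ℕ) (Sfam : Fin n → Set Q)
    (hinj : Function.Injective Sfam) (hne : ∀ i, (Sfam i).Nonempty)
    (hselective : ∀ q : Q, ∃ I : Set (Fin n), I.Nonempty ∧ (⋂ i ∈ I, Sfam i) = {q}) :
    Fintype.card Q ≤ n.choose (n / 2) := by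
  classical
  choose I hIne hI using hselective
  set f : Q → Finset (Fin n) := fun q => (I q).toFinset with hf
  have hIco : ∀ q, (⋂ i ∈ f q, Sfam i) = {q} := by
    intro q
    rw [← hI q]
    apply Set.iInter_congr
    intro i
    simp [hf]
  -- injectivity of f
  have hfinj : Function.Injective f := by
    intro q q' h
    have : ({q} : Set Q) = {q'} := by rw [← hIco q, ← hIco q', h]
    simpa using this
  -- antichain
  have hanti : IsAntichain (· ⊆ ·)
      ((Finset.univ.image f : Finset (Finset (Fin n))) : Set (Finset (Fin n))) := by
    rintro a ha b hb hab hsub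
    simp only [Finset.coe_image, Set.mem_image, Finset.mem_coe, Finset.mem_univ] at ha hb
    obtain ⟨q, -, rfl⟩ := ha
    obtain ⟨q', -, rfl⟩ := hb
    have hsubset : (⋂ i ∈ f q', Sfam i) ⊆ ⋂ i ∈ f q, Sfam i := by
      intro x hx
      simp only [Set.mem_iInter] at hx ⊢
      exact fun i hi => hx i (hsub hi)
    rw [hIco q, hIco q'] at hsubset
    exact hab (by rw [Set.singleton_subset_singleton.mp hsubset])
  have hsp := IsAntichain.sperner hanti
  have hcard : (Finset.univ.image f).card = Fintype.card Q := by
    rw [Finset.card_image_of_injective _ hfinj, Finset.card_univ]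
  rw [hcard] at hsp
  simpa using hsp

end JC
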